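/- Let A be a perinormal ring and B a flat overring of A. Then B is perinormal. -/

import Mathlib

open TensorProduct

/-- Going down for a ring homomorphism. -/
def GoingDown {R S : Type*} [CommRing R] [CommRing S] (f : R →+* S) : Prop :=
  ∀ (P₁ P₂ : Ideal R), P₁.IsPrime → P₂.IsPrime → P₁ ≤ P₂ →
    ∀ Q₂ : Ideal S, Q₂.IsPrime → Q₂.comap f = P₂ →
      ∃ Q₁ : Ideal S, Q₁.IsPrime ∧ Q₁ ≤ Q₂ ∧ Q₁.comap f = P₁

/-- A ring is perinormal if every going-down overring is flat. -/
def Perinormal (A : Type*) [CommRing A] : Prop :=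
  ∀ B : Subalgebra A (Localization (nonZeroDivisors A)),
    GoingDown (algebraMap A B) → Module.Flat A B


section GD

variable {R S : Type*} [CommRing R] [CommRing S] [Algebra R S]

/-- For a flat algebra, contraction of extension of a prime contained in a
contracted prime is itself. -/
theorem comap_map_le_of_flat [Module.Flat R S] {P : Ideal R} (hP : P.IsPrime)
    {Q : Ideal S} (hQ : Q.IsPrime) (hle : P ≤ Q.comap (algebraMap R S)) :
    (P.map (algebraMap R S)).comap (algebraMap R S) ≤ P := by
  intro a ha
  by_contra haP
  -- a • : R⧸P → R⧸P is injective
  set N := R ⧸ P with hN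
  haveI : P.IsPrime := hP
  haveI : IsDomain (R ⧸ P) := Ideal.Quotient.isDomain P
  have hsmul_eq : ∀ (r : R) (x : R ⧸ P), r • x = (Ideal.Quotient.mk P r) * x := by
    intro r x
    obtain ⟨x, rfl⟩ := Ideal.Quotient.mk_surjective (I := P) x
    rw [← map_mul, ← smul_eq_mul]
    exact (Submodule.Quotient.mk_smul P r x).symm
  have hinj : Function.Injective (LinearMap.lsmul R N a) := by
    intro x y hxy
    have heq : (Ideal.Quotient.mk P a) * x = (Ideal.Quotient.mk P a) * y := by
      rw [← hsmul_eq, ← hsmul_eq]; exact hxy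
    have hane : (Ideal.Quotient.mk P a) ≠ 0 := by
      simpa [Ideal.Quotient.eq_zero_iff_mem] using haP
    exact mul_left_cancel₀ hane heq
  -- pure tensors with first factor in P.map vanish
  have hzero : ∀ s' ∈ P.map (algebraMap R S), ∀ n : N, s' ⊗ₜ[R] n = (0 : S ⊗[R] N) := by
    intro s' hs'
    refine Submodule.span_induction ?_ ?_ ?_ ?_ hs'
    · rintro _ ⟨p, hp, rfl⟩ n
      have hpn : p • n = 0 := by
        rw [hsmul_eq, Ideal.Quotient.eq_zero_iff_mem.mpr hp, zero_mul]
      calc algebraMap R S p ⊗ₜ[R] n = (p • (1 : S)) ⊗ₜ[R] n := by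
            rw [Algebra.smul_def, mul_one]
        _ = (1 : S) ⊗ₜ[R] (p • n) := smul_tmul p 1 n
        _ = 0 := by rw [hpn, tmul_zero]
    · intro n; simp
    · intro x y _ _ hx hy n
      rw [add_tmul, hx n, hy n, add_zero]
    · intro c x _ hx n
      rw [← smul_tmul', hx n, smul_zero]
  -- the tensored lsmul map is zero
  have hzmap : ∀ z : S ⊗[R] N, LinearMap.lTensor S (LinearMap.lsmul R N a) z = 0 := by
    intro z
    induction z using TensorProduct.induction_on with
    | zero => simp
    | tmul s n =>
        rw [LinearMap.lTensor_tmul, LinearMap.lsmul_apply, ← smul_tmul]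
        exact hzero _ (by simpa [Algebra.smul_def] using
          (P.map (algebraMap R S)).mul_mem_right s ha) n
    | add x y hx hy => rw [map_add, hx, hy, add_zero]
  have hsub : Subsingleton (S ⊗[R] N) := by
    have hinj' := Module.Flat.lTensor_preserves_injective_linearMap
      (M := S) (LinearMap.lsmul R N a) hinj
    refine ⟨fun x y => hinj' ?_⟩
    rw [hzmap x, hzmap y]
  -- transfer to quotient: P • ⊤ = ⊤ in S
  haveI hsub2 : Subsingleton (S ⧸ (P • (⊤ : Submodule R S))) := by
    haveI := hsub
    haveI : Subsingleton ((R ⧸ P) ⊗[R] S) := (TensorProduct.comm R (R ⧸ P) S).toEquiv.subsingleton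
    exact (TensorProduct.quotTensorEquivQuotSMul S P).symm.toEquiv.subsingleton
  have htop : P • (⊤ : Submodule R S) = ⊤ := Submodule.unique_quotient_iff_eq_top.mp ⟨Unique.mk' _⟩
  -- but P • ⊤ ⊆ Q
  have hPQ : P • (⊤ : Submodule R S) ≤ Q.restrictScalars R := by
    refine Submodule.smul_le.mpr ?_
    intro p hp s _
    rw [Algebra.smul_def]
    exact Q.mul_mem_right s (hle hp)
  have h1 : (1 : S) ∈ P • (⊤ : Submodule R S) := by rw [htop]; trivial
  exact hQ.ne_top (Ideal.eq_top_iff_one _ |>.mpr (hPQ h1))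

end GD

section GD2
variable {R S : Type*} [CommRing R] [CommRing S] [Algebra R S]

theorem goingDown_of_flat [Module.Flat R S] : GoingDown (algebraMap R S) := by
  intro P₁ P₂ h1 h2 h12 Q₂ hQ₂ hcomap
  set S' := Localization.AtPrime Q₂ with hS'
  haveI : Module.Flat S S' := IsLocalization.flat _ Q₂.primeCompl
  haveI : Module.Flat R S' := Module.Flat.trans R S _
  haveI := IsLocalization.AtPrime.isLocalRing S' Q₂
  have hcm : (IsLocalRing.maximalIdeal S').comap (algebraMap S S') = Q₂ :=
    Localization.AtPrime.comap_maximalIdeal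
  have halg : algebraMap R S' = (algebraMap S S').comp (algebraMap R S) :=
    IsScalarTower.algebraMap_eq R S S'
  -- maximal ideal of S' contracts to P₂ in R
  have hmax : (IsLocalRing.maximalIdeal S').comap (algebraMap R S') = P₂ := by
    rw [halg, ← Ideal.comap_comap, hcm, hcomap]
  have hP₁le : P₁ ≤ (IsLocalRing.maximalIdeal S').comap (algebraMap R S') :=
    hmax ▸ h12
  have key : (P₁.map (algebraMap R S')).comap (algebraMap R S') ≤ P₁ :=
    comap_map_le_of_flat h1 (IsLocalRing.maximalIdeal.isMaximal S').isPrime hP₁le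
  -- find a prime of S' over P₁
  have hdisj : Disjoint ((P₁.map (algebraMap R S') : Ideal S') : Set S')
      ((P₁.primeCompl.map (algebraMap R S') : Submonoid S') : Set S') := by
    rw [Set.disjoint_left]
    rintro x hx ⟨y, hy, rfl⟩
    exact hy (key hx)
  obtain ⟨q, hq, hleq, hdq⟩ := Ideal.exists_le_prime_disjoint _ _ hdisj
  have hqcomap : q.comap (algebraMap R S') = P₁ := by
    apply le_antisymm
    · intro r hr
      by_contra hrP
      exact Set.disjoint_left.mp hdq hr ⟨r, hrP, rfl⟩
    · exact le_trans (Ideal.le_comap_map) (Ideal.comap_mono hleq)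
  have hqle : q ≤ IsLocalRing.maximalIdeal S' := IsLocalRing.le_maximalIdeal hq.ne_top
  refine ⟨q.comap (algebraMap S S'), Ideal.IsPrime.comap _, ?_, ?_⟩
  · calc q.comap (algebraMap S S') ≤ (IsLocalRing.maximalIdeal S').comap (algebraMap S S') :=
        Ideal.comap_mono hqle
      _ = Q₂ := hcm
  · rw [← hqcomap, halg, Ideal.comap_comap]
end GD2


section Epi
variable {R S : Type*} [CommRing R] [CommRing S] [Algebra R S]
variable (M : Type*) [AddCommGroup M] [Module R M] [Module S M] [IsScalarTower R S M]

/-- balanced property from the epi condition -/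
theorem epi_balance (hepi : ∀ s : S, s ⊗ₜ[R] (1 : S) = (1 : S) ⊗ₜ[R] s)
    (P : Type*) [AddCommGroup P] [Module R P] [Module S P] [IsScalarTower R S P]
    (s : S) (p : P) (m : M) :
    (s • p) ⊗ₜ[R] m = p ⊗ₜ[R] (s • m) := by
  let Φ : S →ₗ[R] S →ₗ[R] (P ⊗[R] M) :=
    LinearMap.mk₂ R (fun x y => (x • p) ⊗ₜ[R] (y • m))
      (fun x x' y => by simp only [add_smul, add_tmul])
      (fun r x y => by simp only [smul_assoc, smul_tmul'])
      (fun x y y' => by simp only [add_smul, tmul_add])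
      (fun r x y => by simp only [smul_assoc, tmul_smul])
  have := congrArg (TensorProduct.lift Φ) (hepi s)
  rw [lift.tmul, lift.tmul] at this
  have h2 : (s • p) ⊗ₜ[R] ((1:S) • m) = ((1:S) • p) ⊗ₜ[R] (s • m) := this
  simpa only [one_smul] using h2

/-- canonical map P ⊗[R] M → P ⊗[S] M -/
noncomputable def piMap (P : Type*) [AddCommGroup P] [Module R P] [Module S P]
    [IsScalarTower R S P] : (P ⊗[R] M) →ₗ[R] (P ⊗[S] M) :=
  TensorProduct.lift <|
    LinearMap.mk₂ R (fun (p : P) (m : M) => p ⊗ₜ[S] m)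
      (fun p p' m => by simp only [add_tmul])
      (fun r p m => by simp only [← smul_tmul'])
      (fun p m m' => by simp only [tmul_add])
      (fun r p m => by
        show p ⊗ₜ[S] (r • m) = r • (p ⊗ₜ[S] m)
        rw [← algebraMap_smul S r m, ← smul_tmul, algebraMap_smul S r p, ← smul_tmul'])

/-- reverse map, using the balance property -/
noncomputable def psiMap (hepi : ∀ s : S, s ⊗ₜ[R] (1 : S) = (1 : S) ⊗ₜ[R] s)
    (P : Type*) [AddCommGroup P] [Module R P] [Module S P] [IsScalarTower R S P] :
    (P ⊗[S] M) →ₗ[S] (P ⊗[R] M) :=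
  TensorProduct.lift <|
    LinearMap.mk₂ S (fun (p : P) (m : M) => p ⊗ₜ[R] m)
      (fun p p' m => by simp only [add_tmul])
      (fun s p m => by simp only [← smul_tmul'])
      (fun p m m' => by simp only [tmul_add])
      (fun s p m => by simp only [← epi_balance M hepi P s p m, ← smul_tmul'])

theorem psi_pi (hepi : ∀ s : S, s ⊗ₜ[R] (1 : S) = (1 : S) ⊗ₜ[R] s)
    (P : Type*) [AddCommGroup P] [Module R P] [Module S P] [IsScalarTower R S P]
    (x : P ⊗[R] M) : psiMap M hepi P (piMap M P x) = x := by
  induction x using TensorProduct.induction_on with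
  | zero => simp
  | tmul p m => simp [piMap, psiMap]; rfl
  | add x y hx hy => rw [map_add, map_add, hx, hy]

theorem pi_psi (hepi : ∀ s : S, s ⊗ₜ[R] (1 : S) = (1 : S) ⊗ₜ[R] s)
    (P : Type*) [AddCommGroup P] [Module R P] [Module S P] [IsScalarTower R S P]
    (x : P ⊗[S] M) : piMap M P (psiMap M hepi P x) = x := by
  induction x using TensorProduct.induction_on with
  | zero => simp
  | tmul p m => simp [piMap, psiMap]; rfl
  | add x y hx hy => rw [map_add, map_add, hx, hy]

/-- flatness descends along an epimorphism -/
theorem flat_of_epi (hepi : ∀ s : S, s ⊗ₜ[R] (1 : S) = (1 : S) ⊗ₜ[R] s)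
    [Module.Flat R M] : Module.Flat S M := by
  rw [Module.Flat.iff_rTensor_injective']
  intro I
  -- equip ↥I with an R-module structure
  letI : Module R ↥I := (Submodule.restrictScalars R (I : Submodule S S)).module
  haveI : @IsScalarTower R S ↥I _ (Submodule.module I).toSMul this.toSMul := ⟨fun r s x => Subtype.ext (by
    show (r • s) * (x : S) = r • (s * (x : S))
    rw [Algebra.smul_def, Algebra.smul_def, mul_assoc])⟩
  -- the R-linear subtype map
  let σ : ↥I →ₗ[R] S :=
    { toFun := fun x => (x : S)
      map_add' := fun x y => rfl
      map_smul' := fun r x => rfl }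
  have hσ : Function.Injective σ := fun x y h => Subtype.ext h
  intro x y hxy
  obtain ⟨x', rfl⟩ : ∃ x', piMap (R := R) (S := S) M ↥I x' = x :=
    ⟨psiMap M hepi ↥I x, pi_psi M hepi ↥I x⟩
  obtain ⟨y', rfl⟩ : ∃ y', piMap (R := R) (S := S) M ↥I y' = y :=
    ⟨psiMap M hepi ↥I y, pi_psi M hepi ↥I y⟩
  have key : ∀ z : ↥I ⊗[R] M,
      psiMap M hepi S (LinearMap.rTensor M I.subtype (piMap M ↥I z)) =
        LinearMap.rTensor M σ z := by
    intro z
    induction z using TensorProduct.induction_on with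
    | zero => simp
    | tmul i m => simp [piMap, psiMap, σ]; rfl
    | add a b ha hb => rw [map_add, map_add, map_add, map_add, ha, hb]
  have h2 : LinearMap.rTensor M σ x' = LinearMap.rTensor M σ y' := by
    rw [← key, ← key, hxy]
  have := Module.Flat.rTensor_preserves_injective_linearMap (M := M) σ hσ h2
  rw [this]

end Epi

theorem GoingDown.comp {A B C : Type*} [CommRing A] [CommRing B] [CommRing C]
    {f : A →+* B} {g : B →+* C} (hf : GoingDown f) (hg : GoingDown g) :
    GoingDown (g.comp f) := by
  intro P₁ P₂ h1 h2 h12 Q₂ hQ₂ hcomap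
  have hR2 : (Q₂.comap g).IsPrime := Ideal.IsPrime.comap g
  have hR2c : (Q₂.comap g).comap f = P₂ := by rw [Ideal.comap_comap]; exact hcomap
  obtain ⟨R₁, hR₁, hR₁le, hR₁c⟩ := hf P₁ P₂ h1 h2 h12 (Q₂.comap g) hR2 hR2c
  obtain ⟨Q₁, hQ₁, hQ₁le, hQ₁c⟩ := hg R₁ (Q₂.comap g) hR₁ hR2 hR₁le Q₂ hQ₂ rfl
  exact ⟨Q₁, hQ₁, hQ₁le, by rw [← Ideal.comap_comap, hQ₁c, hR₁c]⟩

set_option maxHeartbeats 1000000 in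
set_option synthInstance.maxHeartbeats 1000000 in
-- epi property for flat overrings
theorem overring_epi (A : Type*) [CommRing A]
    (B : Subalgebra A (Localization (nonZeroDivisors A))) [Module.Flat A ↥B] :
    ∀ b : ↥B, b ⊗ₜ[A] (1 : ↥B) = (1 : ↥B) ⊗ₜ[A] b := by
  intro b
  set K := Localization (nonZeroDivisors A)
  obtain ⟨⟨a, s⟩, hs⟩ := IsLocalization.surj (nonZeroDivisors A) (b : K)
  -- hs : (b : K) * algebraMap A K s = algebraMap A K a
  have hsB : b * algebraMap A ↥B (s : A) = algebraMap A ↥B a := by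
    apply Subtype.ext
    simpa using hs
  -- s-scaling is injective on ↥B
  have hsinj : Function.Injective (fun x : ↥B => (s : A) • x) := by
    intro x y hxy
    apply Subtype.ext
    have h1 : (s : A) • (x : K) = (s : A) • (y : K) := congrArg Subtype.val hxy
    have hu : IsUnit (algebraMap A K (s : A)) := IsLocalization.map_units K s
    rw [Algebra.smul_def, Algebra.smul_def] at h1
    exact (hu.mul_right_injective h1 : _)
  -- as a linear map
  let μ : ↥B →ₗ[A] ↥B :=
    { toFun := fun x => (s : A) • x
      map_add' := fun x y => smul_add _ _ _
      map_smul' := fun r x => smul_comm _ _ _ }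
  have hμinj : Function.Injective μ := hsinj
  have hTinj := Module.Flat.lTensor_preserves_injective_linearMap (M := ↥B) μ hμinj
  apply hTinj
  show b ⊗ₜ[A] ((s : A) • (1:↥B)) = (1:↥B) ⊗ₜ[A] ((s : A) • b)
  calc b ⊗ₜ[A] ((s : A) • (1:↥B)) = ((s : A) • b) ⊗ₜ[A] (1:↥B) := (smul_tmul _ _ _).symm
    _ = (algebraMap A ↥B a) ⊗ₜ[A] (1:↥B) := by
        rw [Algebra.smul_def, mul_comm, hsB]
    _ = (a • (1:↥B)) ⊗ₜ[A] (1:↥B) := by rw [Algebra.smul_def, mul_one]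
    _ = (1:↥B) ⊗ₜ[A] (a • (1:↥B)) := smul_tmul _ _ _
    _ = (1:↥B) ⊗ₜ[A] (algebraMap A ↥B a) := by rw [Algebra.smul_def, mul_one]
    _ = (1:↥B) ⊗ₜ[A] ((s : A) • b) := by
        rw [Algebra.smul_def, mul_comm, hsB]

set_option maxHeartbeats 2000000 in
set_option synthInstance.maxHeartbeats 2000000 in
theorem statement2 (A : Type*) [CommRing A] (hA : Perinormal A)
    (B : Subalgebra A (Localization (nonZeroDivisors A))) [Module.Flat A B] :
    ∀ (C : Subalgebra A (Localization (nonZeroDivisors A))) (hBC : B ≤ C),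
      GoingDown (Subalgebra.inclusion hBC).toRingHom →
        letI : Algebra B C := (Subalgebra.inclusion hBC).toRingHom.toAlgebra
        Module.Flat B C := by
  intro C hBC hGD
  letI : Algebra ↥B ↥C := (Subalgebra.inclusion hBC).toRingHom.toAlgebra
  have halg : (algebraMap A ↥C) =
      ((Subalgebra.inclusion hBC).toRingHom).comp (algebraMap A ↥B) :=
    RingHom.ext fun a => rfl
  have hGDB : GoingDown (algebraMap A ↥B) := goingDown_of_flat
  have hGDC : GoingDown (algebraMap A ↥C) := by rw [halg]; exact hGDB.comp hGD
  haveI : Module.Flat A ↥C := hA C hGDC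
  haveI : IsScalarTower A ↥B ↥C := IsScalarTower.of_algebraMap_eq (fun a => by rw [halg]; rfl)
  exact flat_of_epi (↥C) (overring_epi A B)
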